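/- Let a, x, v ∈ ℝ⁴ with ‖a‖ < 1, ‖x‖ = 1, and ⟨x, v⟩ = 0, and define ψ_a(y) = a + ((1 − ‖a‖²)/(1 + 2⟨a,y⟩ + ‖a‖²))·(y + a). Then ψ_a is differentiable at x and the Fréchet derivative of ψ_a at x satisfies ‖(Dψ_a)(x)·v‖ = ((1 − ‖a‖²)/(1 + 2⟨a,x⟩ + ‖a‖²))·‖v‖. In other words, ψ_a restricted to the unit sphere is conformal with conformal factor (1 − ‖a‖²)/(1 + 2⟨a,x⟩ + ‖a‖²) at x. -/

import Mathlib

open scoped RealInnerProductSpace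

/-- The conformal transformation `ψ_a` of `S³` is conformal at `x ∈ S³` with conformal
factor `(1 − ‖a‖²)/(1 + 2⟨a,x⟩ + ‖a‖²)` on tangent vectors `v ⊥ x`. -/
theorem conformal_factor_of_sphere_transformation
    (a x v : EuclideanSpace ℝ (Fin 4)) (ha : ‖a‖ < 1) (hx : ‖x‖ = 1)
    (hv : ⟪x, v⟫ = 0)
    (ψ : EuclideanSpace ℝ (Fin 4) → EuclideanSpace ℝ (Fin 4))
    (hψ : ∀ y : EuclideanSpace ℝ (Fin 4),
      ψ y = a + ((1 - ‖a‖ ^ 2) / (1 + 2 * ⟪a, y⟫ + ‖a‖ ^ 2)) • (y + a)) :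
    DifferentiableAt ℝ ψ x ∧
    ‖fderiv ℝ ψ x v‖ = ((1 - ‖a‖ ^ 2) / (1 + 2 * ⟪a, x⟫ + ‖a‖ ^ 2)) * ‖v‖ := by
  obtain rfl : ψ = fun y => a + ((1 - ‖a‖ ^ 2) / (1 + 2 * ⟪a, y⟫ + ‖a‖ ^ 2)) • (y + a) :=
    funext hψ
  set c : ℝ := 1 - ‖a‖ ^ 2 with hc
  set d : ℝ := 1 + 2 * ⟪a, x⟫ + ‖a‖ ^ 2 with hd
  -- positivity of the denominator
  have hax : |⟪a, x⟫| ≤ ‖a‖ := by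
    have := abs_real_inner_le_norm a x
    rwa [hx, mul_one] at this
  have hax' := abs_le.mp hax
  have hdpos : 0 < d := by
    have h0 : (0:ℝ) ≤ ‖a‖ := norm_nonneg a
    nlinarith [hax'.1]
  have hdne : d ≠ 0 := ne_of_gt hdpos
  have hcpos : 0 < c := by
    have h0 : (0:ℝ) ≤ ‖a‖ := norm_nonneg a
    nlinarith
  -- derivative of the denominator function
  have h1 : HasFDerivAt (fun y : EuclideanSpace ℝ (Fin 4) => ⟪a, y⟫) (innerSL ℝ a) x := (innerSL ℝ a).hasFDerivAt
  have hD : HasFDerivAt (fun y : EuclideanSpace ℝ (Fin 4) => 1 + 2 * ⟪a, y⟫ + ‖a‖ ^ 2)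
      ((2 : ℝ) • (innerSL ℝ a : EuclideanSpace ℝ (Fin 4) →L[ℝ] ℝ)) x := by
    simpa using ((h1.const_mul (2:ℝ)).const_add 1).add_const (‖a‖ ^ 2)
  -- derivative of the scalar factor
  have hinv : HasDerivAt (fun t : ℝ => c / t) (c * -(d ^ 2)⁻¹) d := by
    simpa [div_eq_mul_inv] using (hasDerivAt_inv hdne).const_mul c
  have hg : HasFDerivAt (fun y : EuclideanSpace ℝ (Fin 4) => c / (1 + 2 * ⟪a, y⟫ + ‖a‖ ^ 2))
      ((c * -(d ^ 2)⁻¹) • ((2 : ℝ) • (innerSL ℝ a : EuclideanSpace ℝ (Fin 4) →L[ℝ] ℝ))) x := by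
    have := hinv.comp_hasFDerivAt x hD
    exact this
  -- derivative of y ↦ y + a
  have hy : HasFDerivAt (fun y : EuclideanSpace ℝ (Fin 4) => y + a) (ContinuousLinearMap.id ℝ (EuclideanSpace ℝ (Fin 4))) x :=
    (hasFDerivAt_id x).add_const a
  -- full derivative
  have hsmul := hg.smul hy
  have hψ' : HasFDerivAt (fun y : EuclideanSpace ℝ (Fin 4) => a + (c / (1 + 2 * ⟪a, y⟫ + ‖a‖ ^ 2)) • (y + a))
      ((c / d) • ContinuousLinearMap.id ℝ (EuclideanSpace ℝ (Fin 4)) +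
        (((c * -(d ^ 2)⁻¹) • ((2 : ℝ) • (innerSL ℝ a : EuclideanSpace ℝ (Fin 4) →L[ℝ] ℝ))).smulRight (x + a))) x := by
    have := hsmul.const_add a
    simpa [div_eq_mul_inv, hd] using this
  refine ⟨hψ'.differentiableAt, ?_⟩
  rw [hψ'.fderiv]
  -- compute the value of the derivative on v
  set t : ℝ := (c * -(d ^ 2)⁻¹) * (2 * ⟪a, v⟫) with ht
  have hval : ((c / d) • ContinuousLinearMap.id ℝ (EuclideanSpace ℝ (Fin 4)) +
      (((c * -(d ^ 2)⁻¹) • ((2 : ℝ) • (innerSL ℝ a : EuclideanSpace ℝ (Fin 4) →L[ℝ] ℝ))).smulRight (x + a))) v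
      = (c / d) • v + t • (x + a) := by
    simp [ht, ContinuousLinearMap.smulRight_apply, mul_assoc]
  rw [hval]
  -- norm computation
  have hvx : ⟪v, x⟫ = 0 := by rw [real_inner_comm]; exact hv
  have hxa2 : ‖x + a‖ ^ 2 = d := by
    rw [@norm_add_sq_real]
    rw [hx, real_inner_comm a x]
    ring
  have hva : ⟪v, x + a⟫ = ⟪v, a⟫ := by
    rw [inner_add_right, hvx, zero_add]
  have hsq : ‖(c / d) • v + t • (x + a)‖ ^ 2 = ((c / d) * ‖v‖) ^ 2 := by
    rw [@norm_add_sq_real, norm_smul, norm_smul, real_inner_smul_left, real_inner_smul_right,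
      hva]
    rw [mul_pow, mul_pow, Real.norm_eq_abs, Real.norm_eq_abs, sq_abs, sq_abs, hxa2]
    have hav : ⟪a, v⟫ = ⟪v, a⟫ := real_inner_comm v a
    rw [ht, hav]
    field_simp
    ring
  have hnn : 0 ≤ (c / d) * ‖v‖ :=
    mul_nonneg (le_of_lt (div_pos hcpos hdpos)) (norm_nonneg v)
  calc ‖(c / d) • v + t • (x + a)‖
      = Real.sqrt (‖(c / d) • v + t • (x + a)‖ ^ 2) := (Real.sqrt_sq (norm_nonneg _)).symm
    _ = Real.sqrt (((c / d) * ‖v‖) ^ 2) := by rw [hsq]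
    _ = (c / d) * ‖v‖ := Real.sqrt_sq hnn
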